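/- Let λ > 0 and let {a_k}_{k≥0} be a sequence of real numbers with 0 < a_k ≤ 1 for all k. Define t_0 = 0 and t_{n+1} = t_n + a_n. Then for all integers 0 ≤ n₀ ≤ n: Σ_{k=n₀}^{n−1} exp(−λ (t_n − t_{k+1})) · a_k ≤ e^λ / λ. -/

import Mathlib

/-- Let λ > 0 and let {a_k} be a sequence of reals with 0 < a_k ≤ 1. Define t_0 = 0 and
t_{n+1} = t_n + a_n. Then for all 0 ≤ n₀ ≤ n,
Σ_{k=n₀}^{n−1} exp(−λ (t_n − t_{k+1})) · a_k ≤ e^λ / λ. -/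
theorem stmt16 (lam : ℝ) (hlam : 0 < lam) (a : ℕ → ℝ)
    (ha : ∀ k, 0 < a k ∧ a k ≤ 1)
    (t : ℕ → ℝ) (ht0 : t 0 = 0) (ht : ∀ n, t (n + 1) = t n + a n) :
    ∀ n₀ n : ℕ, n₀ ≤ n →
      ∑ k ∈ Finset.Ico n₀ n, Real.exp (-lam * (t n - t (k + 1))) * a k ≤
        Real.exp lam / lam := by
  intro n₀ n hn
  set g : ℕ → ℝ := fun k => Real.exp lam / lam * Real.exp (-lam * (t n - t k)) with hg
  have key : ∀ k, Real.exp (-lam * (t n - t (k + 1))) * a k ≤ g (k + 1) - g k := by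
    intro k
    have hak := ha k
    have hx : (0:ℝ) < Real.exp (-lam * (t n - t (k + 1))) := Real.exp_pos _
    have hdecomp : Real.exp (-lam * (t n - t k)) =
        Real.exp (-lam * (t n - t (k + 1))) * Real.exp (-(lam * a k)) := by
      rw [← Real.exp_add]
      congr 1
      rw [ht k]; ring
    -- pointwise scalar inequality
    have hu : 0 < lam * a k := mul_pos hlam hak.1
    have h1 : lam * a k * Real.exp (-(lam * a k)) ≤ 1 - Real.exp (-(lam * a k)) := by
      have h := Real.add_one_le_exp (lam * a k)
      have he : 0 < Real.exp (-(lam * a k)) := Real.exp_pos _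
      have hinv : Real.exp (lam * a k) * Real.exp (-(lam * a k)) = 1 := by
        rw [← Real.exp_add]; simp
      nlinarith [mul_le_mul_of_nonneg_right h he.le, hinv]
    have h2 : lam * a k ≤ lam := by nlinarith [hak.2]
    have h3 : Real.exp (lam * a k) ≤ Real.exp lam := Real.exp_le_exp.2 h2
    have he : 0 < Real.exp (-(lam * a k)) := Real.exp_pos _
    have h4 : a k ≤ Real.exp (lam * a k) / lam * (1 - Real.exp (-(lam * a k))) := by
      have hinv : Real.exp (lam * a k) * Real.exp (-(lam * a k)) = 1 :=
        by rw [← Real.exp_add]; simp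
      rw [div_mul_eq_mul_div, le_div_iff₀ hlam]
      nlinarith [mul_le_mul_of_nonneg_left h1 (Real.exp_pos (lam * a k)).le]
    have hnn : 0 ≤ 1 - Real.exp (-(lam * a k)) := by
      have : Real.exp (-(lam * a k)) ≤ 1 := by
        rw [Real.exp_le_one_iff]; linarith
      linarith
    have h5 : a k ≤ Real.exp lam / lam * (1 - Real.exp (-(lam * a k))) :=
      h4.trans (mul_le_mul_of_nonneg_right (div_le_div_of_nonneg_right h3 hlam.le) hnn)
    have h6 := mul_le_mul_of_nonneg_left h5 hx.le
    simp only [hg, hdecomp]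
    nlinarith [h6]
  calc ∑ k ∈ Finset.Ico n₀ n, Real.exp (-lam * (t n - t (k + 1))) * a k
      ≤ ∑ k ∈ Finset.Ico n₀ n, (g (k + 1) - g k) :=
        Finset.sum_le_sum fun k _ => key k
    _ = g n - g n₀ := by
        rw [Finset.sum_Ico_eq_sub _ hn, Finset.sum_range_sub, Finset.sum_range_sub]
        ring
    _ ≤ g n := by
        have : 0 ≤ g n₀ := by positivity
        linarith
    _ ≤ Real.exp lam / lam := by
        simp [hg]
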